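/- For any U ∈ A⁺ and V₁ ∈ A⁺ with U →_R V₁, there exists U' ∈ B⁺ such that V₁ →*_R φ(U') and ρ(U) →_{R_S} U'. -/

import Mathlib

/-- A rewriting system: every rule has nonempty left- and right-hand sides. -/
def IsRWS {α : Type*} (R : Set (List α × List α)) : Prop :=
  ∀ r ∈ R, r.1 ≠ [] ∧ r.2 ≠ []

/-- One-step reduction `W₁ →_R W₂`. -/
def Step {α : Type*} (R : Set (List α × List α)) (W₁ W₂ : List α) : Prop :=
  ∃ Z₁ Z₂ X Y, (X, Y) ∈ R ∧ W₁ = Z₁ ++ X ++ Z₂ ∧ W₂ = Z₁ ++ Y ++ Z₂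

/-- `→*_R`: the reflexive-transitive closure of one-step reduction. -/
def Steps {α : Type*} (R : Set (List α × List α)) : List α → List α → Prop :=
  Relation.ReflTransGen (Step R)

/-- Noetherian: no infinite reduction sequence. -/
def Noetherian {α : Type*} (R : Set (List α × List α)) : Prop :=
  ¬ ∃ g : ℕ → List α, ∀ i, Step R (g i) (g (i + 1))

/-- Confluence. -/
def Confluent {α : Type*} (R : Set (List α × List α)) : Prop :=
  ∀ U V W, Steps R U V → Steps R U W → ∃ X, Steps R V X ∧ Steps R W X

/-- Complete rewriting system: Noetherian and confluent. -/
def CompleteRWS {α : Type*} (R : Set (List α × List α)) : Prop :=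
  Noetherian R ∧ Confluent R

/-- `Irr R W`: `W ∈ A⁺` has no factor which is the left-hand side of a rule. -/
def Irr {α : Type*} (R : Set (List α × List α)) (W : List α) : Prop :=
  W ≠ [] ∧ ¬ ∃ Z₁ X Z₂, (∃ Y, (X, Y) ∈ R) ∧ W = Z₁ ++ X ++ Z₂

/-- `Presents R f`: the map sending a nonempty word `u` over `α` to `f u` exhibits the
semigroup `S` as the semigroup presented by `[α; R]`, i.e. the semigroup `A⁺/↔*_R`:
`f` restricted to nonempty words is a surjective semigroup homomorphism whose kernel
is the congruence `↔*_R` generated by `R` (the value of `f` on the empty word is irrelevant). -/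
def Presents {α S : Type*} [Semigroup S] (R : Set (List α × List α)) (f : List α → S) : Prop :=
  (∀ u v : List α, u ≠ [] → v ≠ [] → f (u ++ v) = f u * f v) ∧
  (∀ x : S, ∃ u : List α, u ≠ [] ∧ f u = x) ∧
  (∀ u v : List α, u ≠ [] → v ≠ [] → (f u = f v ↔ Relation.EqvGen (Step R) u v))

/-- `S` has a finite complete rewriting system. -/
def HasFCRS (S : Type*) [Semigroup S] : Prop :=
  ∃ (α : Type) (R : Set (List α × List α)) (f : List α → S),
    Finite α ∧ R.Finite ∧ IsRWS R ∧ CompleteRWS R ∧ Presents R f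

/-! ### The construction of Section 3: adjoining a letter `s` with `φ(s) = W₀`.
The alphabet `B = A ∪ {s}` is modelled as `α ⊕ Unit`, with `Sum.inl a` the letter
`a ∈ A` and `Sum.inr ()` the new letter `s`. -/

/-- The homomorphism `φ : B* → A*` with `φ(a) = a` for `a ∈ A` and `φ(s) = W₀`. -/
def phiS {α : Type*} (W₀ : List α) (l : List (α ⊕ Unit)) : List α :=
  l.flatMap (Sum.elim (fun a => [a]) (fun _ => W₀))

open scoped Classical in
/-- The function `ρ : A* → B*`: `ρ(ε) = ε`; if `W = X₁W₀` ends with `W₀` then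
`ρ(W) = ρ(X₁)s`; otherwise `W = X₂a` with `a ∈ A` and `ρ(W) = ρ(X₂)a`. -/
noncomputable def rhoS {α : Type*} (W₀ : List α) (W : List α) : List (α ⊕ Unit) :=
  if hW : W = [] then []
  else if h : W₀ ≠ [] ∧ W₀ <:+ W then
    rhoS W₀ (W.take (W.length - W₀.length)) ++ [Sum.inr ()]
  else
    rhoS W₀ W.dropLast ++ [Sum.inl (W.getLast hW)]
termination_by W.length
decreasing_by
  · have h1 : W₀.length ≤ W.length := h.2.length_le
    have h2 : 0 < W₀.length := List.length_pos_iff.mpr h.1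
    simp only [List.length_take]
    omega
  · have h3 : 0 < W.length := List.length_pos_iff.mpr hW
    simp only [List.length_dropLast]
    omega

/-- Rules of the form (C1): `ρ(X) → ρ(Y)` for each rule `X → Y` of `R`. -/
def C1 {α : Type*} (R : Set (List α × List α)) (W₀ : List α) :
    Set (List (α ⊕ Unit) × List (α ⊕ Unit)) :=
  {p | ∃ X Y : List α, (X, Y) ∈ R ∧ p = (rhoS W₀ X, rhoS W₀ Y)}

/-- The rule (C2): `W₀ → s`. -/
def C2 {α : Type*} (W₀ : List α) : Set (List (α ⊕ Unit) × List (α ⊕ Unit)) :=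
  {p | p = (W₀.map Sum.inl, [Sum.inr ()])}

/-- Rules of the form (C3): for each rule `X₁X₂ → Y₁` of `R` with `W₀ = Z₁X₁`
(`X₁, Y₁ ∈ A⁺`, `X₂, Z₁ ∈ A*`), the rule `ρ(Z₁X₁X₂) → ρ(Y₁')` where
`Z₁X₁X₂ →*_R Y₁' ∈ Irr(R)`. -/
def C3 {α : Type*} (R : Set (List α × List α)) (W₀ : List α) :
    Set (List (α ⊕ Unit) × List (α ⊕ Unit)) :=
  {p | ∃ X₁ X₂ Y₁ Z₁ Y₁' : List α, X₁ ≠ [] ∧ Y₁ ≠ [] ∧ (X₁ ++ X₂, Y₁) ∈ R ∧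
    W₀ = Z₁ ++ X₁ ∧ Steps R (Z₁ ++ X₁ ++ X₂) Y₁' ∧ Irr R Y₁' ∧
    p = (rhoS W₀ (Z₁ ++ X₁ ++ X₂), rhoS W₀ Y₁')}

/-- Rules of the form (C4): for each rule `X₂X₁ → Y₁` of `R` with `W₀ = X₁Z₁`
(`X₁, Y₁ ∈ A⁺`, `X₂, Z₁ ∈ A*`), the rule `ρ(X₂X₁Z₁) → ρ(Y₁')` where
`X₂X₁Z₁ →*_R Y₁' ∈ Irr(R)`. -/
def C4 {α : Type*} (R : Set (List α × List α)) (W₀ : List α) :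
    Set (List (α ⊕ Unit) × List (α ⊕ Unit)) :=
  {p | ∃ X₁ X₂ Y₁ Z₁ Y₁' : List α, X₁ ≠ [] ∧ Y₁ ≠ [] ∧ (X₂ ++ X₁, Y₁) ∈ R ∧
    W₀ = X₁ ++ Z₁ ∧ Steps R (X₂ ++ X₁ ++ Z₁) Y₁' ∧ Irr R Y₁' ∧
    p = (rhoS W₀ (X₂ ++ X₁ ++ Z₁), rhoS W₀ Y₁')}

/-- Rules of the form (C5): for each rule `X₂X₃X₄ → Y₁` of `R` with `W₀ = X₄X₅ = X₁X₂`
(`X₂, X₄, Y₁ ∈ A⁺`, `X₁, X₃, X₅ ∈ A*`), the rule `ρ(X₁X₂X₃X₄X₅) → ρ(Y₁')` where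
`X₁X₂X₃X₄X₅ →*_R Y₁' ∈ Irr(R)`. -/
def C5 {α : Type*} (R : Set (List α × List α)) (W₀ : List α) :
    Set (List (α ⊕ Unit) × List (α ⊕ Unit)) :=
  {p | ∃ X₁ X₂ X₃ X₄ X₅ Y₁ Y₁' : List α, X₂ ≠ [] ∧ X₄ ≠ [] ∧ Y₁ ≠ [] ∧
    (X₂ ++ X₃ ++ X₄, Y₁) ∈ R ∧ W₀ = X₄ ++ X₅ ∧ W₀ = X₁ ++ X₂ ∧
    Steps R (X₁ ++ X₂ ++ X₃ ++ X₄ ++ X₅) Y₁' ∧ Irr R Y₁' ∧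
    p = (rhoS W₀ (X₁ ++ X₂ ++ X₃ ++ X₄ ++ X₅), rhoS W₀ Y₁')}

/-- Rules of the form (C6): `sX₃ → X₁s` whenever `W₀ = X₁X₂ = X₂X₃` with
`X₁, X₂, X₃ ∈ A⁺`. -/
def C6 {α : Type*} (W₀ : List α) : Set (List (α ⊕ Unit) × List (α ⊕ Unit)) :=
  {p | ∃ X₁ X₂ X₃ : List α, X₁ ≠ [] ∧ X₂ ≠ [] ∧ X₃ ≠ [] ∧
    W₀ = X₁ ++ X₂ ∧ W₀ = X₂ ++ X₃ ∧
    p = (Sum.inr () :: X₃.map Sum.inl, X₁.map Sum.inl ++ [Sum.inr ()])}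

/-- The rewriting system `R_S` over `B = A ∪ {s}`. -/
def RS {α : Type*} (R : Set (List α × List α)) (W₀ : List α) :
    Set (List (α ⊕ Unit) × List (α ⊕ Unit)) :=
  C1 R W₀ ∪ C2 W₀ ∪ C3 R W₀ ∪ C4 R W₀ ∪ C5 R W₀ ∪ C6 W₀
section
variable {α : Type*}

lemma rhoS_nil (W₀ : List α) : rhoS W₀ ([] : List α) = [] := by
  rw [rhoS]; simp

lemma rhoS_append_W0 (W₀ : List α) (hW₀ : W₀ ≠ []) (P : List α) :
    rhoS W₀ (P ++ W₀) = rhoS W₀ P ++ [Sum.inr ()] := by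
  rw [rhoS]
  have h1 : P ++ W₀ ≠ [] := by simp [hW₀]
  rw [dif_neg h1, dif_pos ⟨hW₀, List.suffix_append P W₀⟩]
  have : (P ++ W₀).length - W₀.length = P.length := by simp
  rw [this, List.take_left]

lemma rhoS_append_letter (W₀ : List α) (P : List α) (a : α)
    (h : ¬ W₀ <:+ P ++ [a]) :
    rhoS W₀ (P ++ [a]) = rhoS W₀ P ++ [Sum.inl a] := by
  rw [rhoS]
  have h1 : P ++ [a] ≠ [] := by simp
  rw [dif_neg h1, dif_neg (by tauto)]
  rw [List.dropLast_concat]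
  congr 2
  simp [List.getLast_append]

end
section
variable {α : Type*}

lemma rhoS_ne (W₀ : List α) (W : List α) (hW : W ≠ []) : rhoS W₀ W ≠ [] := by
  rw [rhoS, dif_neg hW]
  split_ifs <;> simp

lemma phiS_append (W₀ : List α) (l₁ l₂ : List (α ⊕ Unit)) :
    phiS W₀ (l₁ ++ l₂) = phiS W₀ l₁ ++ phiS W₀ l₂ := by
  simp [phiS]

lemma phiS_s (W₀ : List α) : phiS W₀ [Sum.inr ()] = W₀ := by simp [phiS]

lemma phiS_letter (W₀ : List α) (a : α) : phiS W₀ [Sum.inl a] = [a] := by simp [phiS]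

lemma phiS_rhoS (W₀ : List α) (hW₀ : W₀ ≠ []) (W : List α) :
    phiS W₀ (rhoS W₀ W) = W := by
  generalize hn : W.length = n
  induction n using Nat.strong_induction_on generalizing W with
  | _ n IH =>
  subst hn
  by_cases hW : W = []
  · subst hW; simp [rhoS_nil, phiS]
  by_cases hsuf : W₀ <:+ W
  · obtain ⟨P, rfl⟩ := hsuf
    rw [rhoS_append_W0 W₀ hW₀ P, phiS_append, phiS_s,
      IH P.length (by simp; exact List.length_pos_iff.2 hW₀) P rfl]
  · obtain ⟨P, a, rfl⟩ := (List.eq_nil_or_concat W).resolve_left hW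
    rw [List.concat_eq_append] at *
    rw [rhoS_append_letter W₀ P a hsuf, phiS_append, phiS_letter,
      IH P.length (by simp) P rfl]

end
section
variable {α : Type*}

lemma suffix_of_suffix_le {l₁ l₂ l : List α} (h₁ : l₁ <:+ l) (h₂ : l₂ <:+ l)
    (hle : l₁.length ≤ l₂.length) : l₁ <:+ l₂ := by
  obtain ⟨t₁, rfl⟩ := h₁
  obtain ⟨t₂, h₂⟩ := h₂
  have hlen : t₂.length ≤ t₁.length := by
    have := congrArg List.length h₂; simp at this; omega
  have : l₁ = l₂.drop (t₁.length - t₂.length) := by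
    have h3 : t₁.length = t₂.length + (t₁.length - t₂.length) := by omega
    calc l₁ = (t₁ ++ l₁).drop t₁.length := by simp
    _ = (t₂ ++ l₂).drop (t₂.length + (t₁.length - t₂.length)) := by rw [h₂, ← h3]
    _ = l₂.drop (t₁.length - t₂.length) := by
        rw [List.drop_append]; simp
  rw [this]
  exact List.drop_suffix _ _

lemma suffix_indep (W₀ T Q Q' : List α) (h : W₀ <:+ Q ++ W₀ ++ T) :
    W₀ <:+ Q' ++ W₀ ++ T := by
  by_cases hT : W₀.length ≤ T.length
  · have : W₀ <:+ T :=
      suffix_of_suffix_le h ((List.suffix_append W₀ T).trans ((List.append_assoc Q W₀ T) ▸ List.suffix_append Q (W₀++T))) hT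
    exact this.trans (List.suffix_append _ _)
  · have hTW : T <:+ W₀ :=
      suffix_of_suffix_le ((List.suffix_append W₀ T).trans ((List.append_assoc Q W₀ T) ▸ List.suffix_append Q (W₀++T))) h (by omega)
    obtain ⟨W', hW'⟩ := hTW
    obtain ⟨u, hu⟩ := h
    nth_rw 1 [← hW'] at hu
    have hu2 : u ++ W' = Q ++ W₀ := by
      have : u ++ W' ++ T = Q ++ W₀ ++ T := by rw [List.append_assoc u, hu]
      exact List.append_cancel_right this
    have hW'W : W' <:+ W₀ := by
      refine suffix_of_suffix_le ⟨u, hu2⟩ (List.suffix_append _ _) ?_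
      have := congrArg List.length hW'; simp at this; omega
    obtain ⟨v, hv⟩ := hW'W
    refine ⟨Q' ++ v, ?_⟩
    calc Q' ++ v ++ W₀ = Q' ++ v ++ (W' ++ T) := by rw [hW']
    _ = (Q' ++ (v ++ W')) ++ T := by simp [List.append_assoc]
    _ = Q' ++ W₀ ++ T := by rw [hv]

end
section
variable {α : Type*} {R : Set (List α × List α)}

lemma step_left (P : List α) {a b : List α} (h : Step R a b) :
    Step R (P ++ a) (P ++ b) := by
  obtain ⟨Z₁, Z₂, X, Y, hR, rfl, rfl⟩ := h
  exact ⟨P ++ Z₁, Z₂, X, Y, hR, by simp, by simp⟩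

lemma step_right (Q : List α) {a b : List α} (h : Step R a b) :
    Step R (a ++ Q) (b ++ Q) := by
  obtain ⟨Z₁, Z₂, X, Y, hR, rfl, rfl⟩ := h
  exact ⟨Z₁, Z₂ ++ Q, X, Y, hR, by simp, by simp⟩

lemma steps_left (P : List α) {a b : List α} (h : Steps R a b) :
    Steps R (P ++ a) (P ++ b) :=
  Relation.ReflTransGen.lift (fun x => P ++ x)
    (fun _ _ h => step_left P h : ∀ x y, Step R x y → Step R (P ++ x) (P ++ y)) _ _ h

lemma steps_right (Q : List α) {a b : List α} (h : Steps R a b) :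
    Steps R (a ++ Q) (b ++ Q) :=
  Relation.ReflTransGen.lift (fun x => x ++ Q)
    (fun _ _ h => step_right Q h : ∀ x y, Step R x y → Step R (x ++ Q) (y ++ Q)) _ _ h

lemma step_ne (hRWS : IsRWS R) {a b : List α} (h : Step R a b) : b ≠ [] := by
  obtain ⟨Z₁, Z₂, X, Y, hR, rfl, rfl⟩ := h
  simp [(hRWS _ hR).2]

lemma steps_ne (hRWS : IsRWS R) {a b : List α} (h : Steps R a b) (ha : a ≠ []) :
    b ≠ [] := by
  induction h with
  | refl => exact ha
  | tail _ hs ih => exact step_ne hRWS hs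

lemma exists_nf (hN : Noetherian R) (W : List α) :
    ∃ W', Steps R W W' ∧ ∀ V, ¬ Step R W' V := by
  by_contra hc
  push_neg at hc
  apply hN
  have key : ∀ p : {V // Steps R W V}, ∃ q : {V // Steps R W V}, Step R p.1 q.1 := by
    rintro ⟨V, hV⟩
    obtain ⟨V', hV'⟩ := hc V hV
    exact ⟨⟨V', hV.tail hV'⟩, hV'⟩
  choose f hf using key
  refine ⟨fun i => (f^[i] ⟨W, .refl⟩).1, fun i => ?_⟩
  simp only [Function.iterate_succ_apply']
  exact hf _

lemma steps_nf_eq {N X : List α} (h : Steps R N X) (hN : ∀ V, ¬ Step R N V) :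
    X = N := by
  induction h with
  | refl => rfl
  | tail hs hstep ih => exact absurd (ih ▸ hstep) (hN _)

lemma steps_to_nf (hconf : Confluent R) {M N N' : List α}
    (h1 : Steps R M N) (h2 : Steps R M N') (hN' : ∀ V, ¬ Step R N' V) :
    Steps R N N' := by
  obtain ⟨X, hX1, hX2⟩ := hconf M N N' h1 h2
  rwa [steps_nf_eq hX2 hN'] at hX1

lemma irr_of_nf {W : List α} (hne : W ≠ []) (h : ∀ V, ¬ Step R W V) : Irr R W := by
  refine ⟨hne, ?_⟩
  rintro ⟨Z₁, X, Z₂, ⟨Y, hY⟩, rfl⟩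
  exact h _ ⟨Z₁, Z₂, X, Y, hY, rfl, rfl⟩

/-- For a nonempty word, get an irreducible descendant. -/
lemma exists_irr_descendant (hRWS : IsRWS R) (hcomp : CompleteRWS R)
    {M : List α} (hM : M ≠ []) :
    ∃ Y', Steps R M Y' ∧ Irr R Y' ∧ (∀ V, ¬ Step R Y' V) := by
  obtain ⟨Y', h1, h2⟩ := exists_nf hcomp.1 M
  exact ⟨Y', h1, irr_of_nf (steps_ne hRWS h1 hM) h2, h2⟩

end
section
variable {α : Type*}

/-- Boundary dichotomy: either `ρ` splits at the boundary `P | S`, or a `W₀`-block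
of the greedy decomposition crosses the boundary. -/
lemma boundary_dichotomy (W₀ : List α) (hW₀len : 1 < W₀.length) (S P : List α) :
    (rhoS W₀ (P ++ S) = rhoS W₀ P ++ rhoS W₀ S) ∨
    (∃ P₁ W₁ W₂ S₁, P = P₁ ++ W₁ ∧ S = W₂ ++ S₁ ∧ W₀ = W₁ ++ W₂ ∧
      W₁ ≠ [] ∧ W₂ ≠ [] ∧
      ∀ Q : List α, rhoS W₀ (Q ++ W₀ ++ S₁) = rhoS W₀ Q ++ [Sum.inr ()] ++ rhoS W₀ S₁) := by
  have hW₀ : W₀ ≠ [] := by intro h; rw [h] at hW₀len; simp at hW₀len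
  generalize hn : S.length = n
  induction n using Nat.strong_induction_on generalizing S P with
  | _ n IH =>
  subst hn
  rcases eq_or_ne S [] with rfl | hS
  · left; simp [rhoS_nil]
  by_cases hsuf : W₀ <:+ P ++ S
  · by_cases hlen : W₀.length ≤ S.length
    · -- W₀ is a suffix of S
      have hWS : W₀ <:+ S := suffix_of_suffix_le hsuf (List.suffix_append P S) hlen
      obtain ⟨S₀, rfl⟩ := hWS
      have hρS : rhoS W₀ (S₀ ++ W₀) = rhoS W₀ S₀ ++ [Sum.inr ()] := rhoS_append_W0 W₀ hW₀ S₀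
      have hρPS : rhoS W₀ (P ++ (S₀ ++ W₀)) = rhoS W₀ (P ++ S₀) ++ [Sum.inr ()] := by
        rw [← List.append_assoc]; exact rhoS_append_W0 W₀ hW₀ (P ++ S₀)
      rcases IH S₀.length (by simp; omega) S₀ P rfl with ha | hb
      · left; rw [hρPS, hρS, ha, List.append_assoc]
      · right
        obtain ⟨P₁, W₁, W₂, S₁, hP, rfl, hW, hW₁, hW₂, hQ⟩ := hb
        refine ⟨P₁, W₁, W₂, S₁ ++ W₀, hP, by simp, hW, hW₁, hW₂, fun Q => ?_⟩
        have e1 : Q ++ W₀ ++ (S₁ ++ W₀) = (Q ++ W₀ ++ S₁) ++ W₀ := by simp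
        rw [e1, rhoS_append_W0 W₀ hW₀, hQ Q, rhoS_append_W0 W₀ hW₀]
        simp
    · -- the final W₀ block crosses the boundary
      right
      push_neg at hlen
      have hSW : S <:+ W₀ :=
        suffix_of_suffix_le (List.suffix_append P S) hsuf (by omega)
      obtain ⟨W₁, hW₁eq⟩ := hSW
      obtain ⟨t, ht⟩ := hsuf
      have hP : P = t ++ W₁ := by
        have : t ++ W₁ ++ S = P ++ S := by rw [List.append_assoc, hW₁eq, ht]
        exact (List.append_cancel_right this).symm
      refine ⟨t, W₁, S, [], hP, by simp, hW₁eq.symm, ?_, hS, fun Q => ?_⟩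
      · intro h; rw [h] at hW₁eq; simp at hW₁eq
        have := congrArg List.length hW₁eq
        omega
      · simp [rhoS_nil, rhoS_append_W0 W₀ hW₀]
  · -- last letter of S is a letter block
    obtain ⟨S₀, a, rfl⟩ := (List.eq_nil_or_concat S).resolve_left hS
    rw [List.concat_eq_append] at *
    have hρS : rhoS W₀ (S₀ ++ [a]) = rhoS W₀ S₀ ++ [Sum.inl a] :=
      rhoS_append_letter W₀ S₀ a (fun h => hsuf (h.trans (List.suffix_append P (S₀ ++ [a]))))
    have hρPS : rhoS W₀ (P ++ (S₀ ++ [a])) = rhoS W₀ (P ++ S₀) ++ [Sum.inl a] := by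
      rw [← List.append_assoc]
      exact rhoS_append_letter W₀ (P ++ S₀) a (by rwa [List.append_assoc])
    rcases IH S₀.length (by simp) S₀ P rfl with ha | hb
    · left; rw [hρPS, hρS, ha, List.append_assoc]
    · right
      obtain ⟨P₁, W₁, W₂, S₁, hP, rfl, hW, hW₁, hW₂, hQ⟩ := hb
      refine ⟨P₁, W₁, W₂, S₁ ++ [a], hP, by simp, hW, hW₁, hW₂, fun Q => ?_⟩
      have hnsuf : ¬ W₀ <:+ Q ++ W₀ ++ (S₁ ++ [a]) := by
        intro h
        apply hsuf
        have : P ++ (W₂ ++ S₁ ++ [a]) = P₁ ++ W₀ ++ (S₁ ++ [a]) := by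
          rw [hP, hW]; simp
        rw [this]
        exact suffix_indep W₀ (S₁ ++ [a]) Q P₁ h
      have e1 : Q ++ W₀ ++ (S₁ ++ [a]) = (Q ++ W₀ ++ S₁) ++ [a] := by simp
      rw [e1, rhoS_append_letter W₀ _ a (by rw [← e1]; exact hnsuf), hQ Q]
      have hnsuf2 : ¬ W₀ <:+ S₁ ++ [a] := by
        intro h; exact hnsuf (h.trans ((List.suffix_append W₀ _).trans (by rw [List.append_assoc]; exact List.suffix_append Q _)))
      rw [rhoS_append_letter W₀ _ a hnsuf2]
      simp
end
section
variable {α : Type*} {R : Set (List α × List α)} {W₀ : List α}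

lemma memRS_C1 {p} (h : p ∈ C1 R W₀) : p ∈ RS R W₀ := by
  simp only [RS, Set.mem_union]; tauto
lemma memRS_C3 {p} (h : p ∈ C3 R W₀) : p ∈ RS R W₀ := by
  simp only [RS, Set.mem_union]; tauto
lemma memRS_C4 {p} (h : p ∈ C4 R W₀) : p ∈ RS R W₀ := by
  simp only [RS, Set.mem_union]; tauto
lemma memRS_C5 {p} (h : p ∈ C5 R W₀) : p ∈ RS R W₀ := by
  simp only [RS, Set.mem_union]; tauto

end
section
variable {α : Type*}

lemma main_induction (R : Set (List α × List α))
    (hRWS : IsRWS R) (hcomp : CompleteRWS R)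
    (W₀ : List α) (hW₀len : 1 < W₀.length) (hW₀irr : Irr R W₀) :
    ∀ n (U Z₁ X Z₂ Y : List α), U.length ≤ n → U = Z₁ ++ X ++ Z₂ → (X, Y) ∈ R →
    ∃ U' : List (α ⊕ Unit), U' ≠ [] ∧ Steps R (Z₁ ++ Y ++ Z₂) (phiS W₀ U') ∧
      Step (RS R W₀) (rhoS W₀ U) U' := by
  have hW₀ : W₀ ≠ [] := by intro h; rw [h] at hW₀len; simp at hW₀len
  intro n
  induction n with
  | zero =>
    intro U Z₁ X Z₂ Y hlen hUeq hXY
    exfalso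
    have hXne : X ≠ [] := (hRWS _ hXY).1
    have hXlen : 0 < X.length := List.length_pos_iff.2 hXne
    have h1 := congrArg List.length hUeq
    simp at h1
    omega
  | succ n IH =>
    intro U Z₁ X Z₂ Y hlen hUeq hXY
    have hXne : X ≠ [] := (hRWS _ hXY).1
    have hYne : Y ≠ [] := (hRWS _ hXY).2
    have hXlen : 0 < X.length := List.length_pos_iff.2 hXne
    by_cases hsuf : W₀ <:+ U
    · -- Case A : U ends with a W₀ block
      obtain ⟨U₁, hU₁⟩ := hsuf    -- hU₁ : U₁ ++ W₀ = U
      have hUlen : U.length = U₁.length + W₀.length := by rw [← hU₁]; simp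
      have hρU : rhoS W₀ U = rhoS W₀ U₁ ++ [Sum.inr ()] := by
        rw [← hU₁, rhoS_append_W0 W₀ hW₀]
      by_cases hZ₂len : W₀.length ≤ Z₂.length
      · -- A1 : recurse on U₁
        have hWZ₂ : W₀ <:+ Z₂ := by
          refine suffix_of_suffix_le ⟨U₁, hU₁⟩ ?_ hZ₂len
          rw [hUeq, List.append_assoc]
          exact (List.suffix_append _ _).trans (List.suffix_append _ _)
        obtain ⟨Z₂', rfl⟩ := hWZ₂
        have hU₁eq : U₁ = Z₁ ++ X ++ Z₂' := by
          refine List.append_cancel_right (bs := W₀) ?_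
          rw [hU₁, hUeq]; simp
        have hU₁len : U₁.length ≤ n := by
          rw [hUeq] at hlen; rw [hU₁eq]; simp at hlen ⊢; omega
        obtain ⟨U'', hne, hsteps, hstep⟩ := IH U₁ Z₁ X Z₂' Y hU₁len hU₁eq hXY
        refine ⟨U'' ++ [Sum.inr ()], by simp, ?_, ?_⟩
        · rw [phiS_append, phiS_s]
          have e : Z₁ ++ Y ++ (Z₂' ++ W₀) = (Z₁ ++ Y ++ Z₂') ++ W₀ := by simp
          rw [e]
          exact steps_right W₀ hsteps
        · rw [hρU]
          exact step_right _ hstep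
      · -- A2 : X meets the final W₀ block
        push_neg at hZ₂len
        have hUlen2 : U.length = Z₁.length + X.length + Z₂.length := by rw [hUeq]; simp; omega
        by_cases hZ₁len : U₁.length ≤ Z₁.length
        · -- A2a : X inside W₀ — contradiction with irreducibility
          exfalso
          have hXZ₂ : X ++ Z₂ <:+ W₀ := by
            refine suffix_of_suffix_le ?_ ⟨U₁, hU₁⟩ ?_
            · rw [hUeq, List.append_assoc]; exact List.suffix_append _ _
            · simp; omega
          obtain ⟨P₀, hP₀⟩ := hXZ₂
          exact hW₀irr.2 ⟨P₀, X, Z₂, ⟨Y, hXY⟩, by rw [← hP₀]; simp⟩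
        · -- A2b
          push_neg at hZ₁len
          set k := U₁.length - Z₁.length with hk
          have hk1 : 0 < k := by omega
          have hk2 : k < X.length := by omega
          set X₂ := X.take k with hX₂
          set X₁ := X.drop k with hX₁
          have hXsplit : X₂ ++ X₁ = X := List.take_append_drop k X
          have hX₂len : X₂.length = k := by rw [hX₂]; simp; omega
          have hX₂ne : X₂ ≠ [] := by
            intro hh; rw [hh] at hX₂len; simp at hX₂len; omega
          have hX₁ne : X₁ ≠ [] := by
            rw [hX₁]; intro hh
            have := congrArg List.length hh; simp at this; omega
          have hsplit2 : U₁ = Z₁ ++ X₂ ∧ W₀ = X₁ ++ Z₂ := by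
            have e : U₁ ++ W₀ = (Z₁ ++ X₂) ++ (X₁ ++ Z₂) := by
              rw [hU₁, hUeq, ← hXsplit]; simp
            have hl : U₁.length = (Z₁ ++ X₂).length := by simp [hX₂len]; omega
            exact List.append_inj e hl
          obtain ⟨hU₁eq, hW₀eq⟩ := hsplit2
          rcases boundary_dichotomy W₀ hW₀len X₂ Z₁ with hsp | hb
          · -- C4 case
            have hMne : X₂ ++ X₁ ++ Z₂ ≠ [] := by simp [hX₂ne]
            obtain ⟨Y₁', hMY, hIrr, hnf⟩ := exists_irr_descendant hRWS hcomp hMne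
            have hrule : (rhoS W₀ (X₂ ++ X₁ ++ Z₂), rhoS W₀ Y₁') ∈ C4 R W₀ :=
              ⟨X₁, X₂, Y, Z₂, Y₁', hX₁ne, hYne, by rw [hXsplit]; exact hXY,
                hW₀eq, hMY, hIrr, rfl⟩
            have hLHS : rhoS W₀ (X₂ ++ X₁ ++ Z₂) = rhoS W₀ X₂ ++ [Sum.inr ()] := by
              have e : X₂ ++ X₁ ++ Z₂ = X₂ ++ W₀ := by rw [hW₀eq]; simp
              rw [e, rhoS_append_W0 W₀ hW₀]
            refine ⟨rhoS W₀ Z₁ ++ rhoS W₀ Y₁', by simp [rhoS_ne W₀ Y₁' hIrr.1], ?_, ?_⟩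
            · rw [phiS_append, phiS_rhoS W₀ hW₀, phiS_rhoS W₀ hW₀]
              have hstepM : Step R (X₂ ++ X₁ ++ Z₂) (Y ++ Z₂) :=
                ⟨[], Z₂, X, Y, hXY, by rw [← hXsplit]; simp, by simp⟩
              have hsteps : Steps R (Y ++ Z₂) Y₁' :=
                steps_to_nf hcomp.2 (Relation.ReflTransGen.single hstepM) hMY hnf
              have e : Z₁ ++ Y ++ Z₂ = Z₁ ++ (Y ++ Z₂) := by simp
              rw [e]
              exact steps_left Z₁ hsteps
            · refine ⟨rhoS W₀ Z₁, [], _, _, memRS_C4 hrule, ?_, by simp⟩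
              rw [hρU, hU₁eq, hsp, hLHS]; simp
          · -- C5 case
            obtain ⟨P₁, W₁, W₂, S₁, hPeq, hSeq, hWeq, hW₁ne, hW₂ne, hQ⟩ := hb
            have hMne : W₁ ++ W₂ ++ S₁ ++ X₁ ++ Z₂ ≠ [] := by simp [hW₁ne]
            obtain ⟨Y₁', hMY, hIrr, hnf⟩ := exists_irr_descendant hRWS hcomp hMne
            have hXeq : W₂ ++ S₁ ++ X₁ = X := by rw [← hXsplit, hSeq]
            have hrule : (rhoS W₀ (W₁ ++ W₂ ++ S₁ ++ X₁ ++ Z₂), rhoS W₀ Y₁') ∈ C5 R W₀ :=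
              ⟨W₁, W₂, S₁, X₁, Z₂, Y, Y₁', hW₂ne, hX₁ne, hYne,
                by rw [hXeq]; exact hXY, hW₀eq, hWeq, hMY, hIrr, rfl⟩
            have hLHS : rhoS W₀ (W₁ ++ W₂ ++ S₁ ++ X₁ ++ Z₂)
                = [Sum.inr ()] ++ rhoS W₀ S₁ ++ [Sum.inr ()] := by
              have e : ([] ++ W₀ ++ S₁) ++ W₀ = W₁ ++ W₂ ++ S₁ ++ X₁ ++ Z₂ := by
                calc ([] ++ W₀ ++ S₁) ++ W₀ = (W₀ ++ S₁) ++ (X₁ ++ Z₂) := by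
                      rw [hW₀eq]; simp
                _ = W₁ ++ W₂ ++ S₁ ++ X₁ ++ Z₂ := by rw [hWeq]; simp
              rw [← e, rhoS_append_W0 W₀ hW₀, hQ [], rhoS_nil]; simp
            have hρU₁ : rhoS W₀ U₁ = rhoS W₀ P₁ ++ [Sum.inr ()] ++ rhoS W₀ S₁ := by
              have e : U₁ = P₁ ++ W₀ ++ S₁ := by
                rw [hU₁eq, hPeq, hSeq, hWeq]; simp
              rw [e, hQ P₁]
            refine ⟨rhoS W₀ P₁ ++ rhoS W₀ Y₁', by simp [rhoS_ne W₀ Y₁' hIrr.1], ?_, ?_⟩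
            · rw [phiS_append, phiS_rhoS W₀ hW₀, phiS_rhoS W₀ hW₀]
              have hstepM : Step R (W₁ ++ W₂ ++ S₁ ++ X₁ ++ Z₂) (W₁ ++ Y ++ Z₂) :=
                ⟨W₁, Z₂, X, Y, hXY, by rw [← hXeq]; simp, rfl⟩
              have hsteps : Steps R (W₁ ++ Y ++ Z₂) Y₁' :=
                steps_to_nf hcomp.2 (Relation.ReflTransGen.single hstepM) hMY hnf
              have e : Z₁ ++ Y ++ Z₂ = P₁ ++ (W₁ ++ Y ++ Z₂) := by rw [hPeq]; simp
              rw [e]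
              exact steps_left P₁ hsteps
            · refine ⟨rhoS W₀ P₁, [], _, _, memRS_C5 hrule, ?_, by simp⟩
              rw [hρU, hρU₁, hLHS]; simp
    · -- Case B : U ends with a letter block
      rcases eq_or_ne Z₂ [] with rfl | hZ₂ne
      · -- B2 : X is a suffix of U
        have hUX : U = Z₁ ++ X := by rw [hUeq]; simp
        rcases boundary_dichotomy W₀ hW₀len X Z₁ with hsp | hb
        · -- C1 case
          have hrule : (rhoS W₀ X, rhoS W₀ Y) ∈ C1 R W₀ := ⟨X, Y, hXY, rfl⟩
          refine ⟨rhoS W₀ Z₁ ++ rhoS W₀ Y, by simp [rhoS_ne W₀ Y hYne], ?_, ?_⟩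
          · rw [phiS_append, phiS_rhoS W₀ hW₀, phiS_rhoS W₀ hW₀]
            have e : Z₁ ++ Y ++ [] = Z₁ ++ Y := by simp
            rw [e]
            exact Relation.ReflTransGen.refl
          · refine ⟨rhoS W₀ Z₁, [], _, _, memRS_C1 hrule, ?_, by simp⟩
            rw [hUX, hsp]; simp
        · -- C3 case
          obtain ⟨P₁, W₁, W₂, S₁, hPeq, hSeq, hWeq, hW₁ne, hW₂ne, hQ⟩ := hb
          have hMne : W₁ ++ W₂ ++ S₁ ≠ [] := by simp [hW₁ne]
          obtain ⟨Y₁', hMY, hIrr, hnf⟩ := exists_irr_descendant hRWS hcomp hMne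
          have hXeq : W₂ ++ S₁ = X := hSeq.symm
          have hrule : (rhoS W₀ (W₁ ++ W₂ ++ S₁), rhoS W₀ Y₁') ∈ C3 R W₀ :=
            ⟨W₂, S₁, Y, W₁, Y₁', hW₂ne, hYne, by rw [hXeq]; exact hXY,
              hWeq, hMY, hIrr, rfl⟩
          have hLHS : rhoS W₀ (W₁ ++ W₂ ++ S₁) = [Sum.inr ()] ++ rhoS W₀ S₁ := by
            have e : W₁ ++ W₂ ++ S₁ = [] ++ W₀ ++ S₁ := by rw [hWeq]; simp
            rw [e, hQ [], rhoS_nil]; simp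
          have hρU : rhoS W₀ U = rhoS W₀ P₁ ++ [Sum.inr ()] ++ rhoS W₀ S₁ := by
            have e : U = P₁ ++ W₀ ++ S₁ := by rw [hUX, hPeq, hSeq, hWeq]; simp
            rw [e, hQ P₁]
          refine ⟨rhoS W₀ P₁ ++ rhoS W₀ Y₁', by simp [rhoS_ne W₀ Y₁' hIrr.1], ?_, ?_⟩
          · rw [phiS_append, phiS_rhoS W₀ hW₀, phiS_rhoS W₀ hW₀]
            have hstepM : Step R (W₁ ++ W₂ ++ S₁) (W₁ ++ Y) :=
              ⟨W₁, [], X, Y, hXY, by rw [← hXeq]; simp, by simp⟩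
            have hsteps : Steps R (W₁ ++ Y) Y₁' :=
              steps_to_nf hcomp.2 (Relation.ReflTransGen.single hstepM) hMY hnf
            have e : Z₁ ++ Y ++ [] = P₁ ++ (W₁ ++ Y) := by rw [hPeq]; simp
            rw [e]
            exact steps_left P₁ hsteps
          · refine ⟨rhoS W₀ P₁, [], _, _, memRS_C3 hrule, ?_, by simp⟩
            rw [hρU, hLHS]; simp
      · -- B1 : recurse on U minus its last letter
        obtain ⟨Z₂', b, rfl⟩ := (List.eq_nil_or_concat Z₂).resolve_left hZ₂ne
        rw [List.concat_eq_append] at *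
        have hUeq' : U = (Z₁ ++ X ++ Z₂') ++ [b] := by rw [hUeq]; simp
        have hρU : rhoS W₀ U = rhoS W₀ (Z₁ ++ X ++ Z₂') ++ [Sum.inl b] := by
          rw [hUeq']
          exact rhoS_append_letter W₀ _ b (by rw [← hUeq']; exact hsuf)
        have hU₁len : (Z₁ ++ X ++ Z₂').length ≤ n := by
          have h2 := congrArg List.length hUeq'
          simp only [List.length_append, List.length_cons, List.length_nil] at h2 ⊢
          omega
        obtain ⟨U'', hne, hsteps, hstep⟩ := IH (Z₁ ++ X ++ Z₂') Z₁ X Z₂' Y hU₁len rfl hXY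
        refine ⟨U'' ++ [Sum.inl b], by simp, ?_, ?_⟩
        · rw [phiS_append, phiS_letter]
          have e : Z₁ ++ Y ++ (Z₂' ++ [b]) = (Z₁ ++ Y ++ Z₂') ++ [b] := by simp
          rw [e]
          exact steps_right [b] hsteps
        · rw [hρU]
          exact step_right _ hstep

end
/-- **Lemma 3.9** (Property (P1)). For any `U ∈ A⁺` and `V₁ ∈ A⁺` with `U →_R V₁`,
there is `U' ∈ B⁺` such that `V₁ →*_R φ(U')` and `ρ(U) →_{R_S} U'`. -/
theorem lemma_3_9 {α : Type*} (R : Set (List α × List α))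
    (hαfin : Finite α) (hRfin : R.Finite) (hRWS : IsRWS R) (hcomp : CompleteRWS R)
    (W₀ : List α) (hW₀len : 1 < W₀.length) (hW₀irr : Irr R W₀)
    (U V₁ : List α) (hU : U ≠ []) (h : Step R U V₁) :
    ∃ U' : List (α ⊕ Unit), U' ≠ [] ∧ Steps R V₁ (phiS W₀ U') ∧
      Step (RS R W₀) (rhoS W₀ U) U' := by
  obtain ⟨Z₁, Z₂, X, Y, hXY, hU1, hV1⟩ := h
  rw [hV1]
  exact main_induction R hRWS hcomp W₀ hW₀len hW₀irr U.length U Z₁ X Z₂ Y le_rfl hU1 hXY
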